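/- Let G be a graph on n nodes and suppose β(G) ≤ k with ⌊(n-1)/2⌋ ≤ k ≤ n-2. Then there exist injections L : {0,...,n-k-2} ↪ V(G) and R : {k+1,...,n-1} ↪ V(G) with disjoint images such that {L(i), R(k+j+1)} ∉ E(G) whenever 0 ≤ i ≤ j < n-k-1. -/

import Mathlib

theorem stmt19 {V : Type} [Fintype V] {n k : ℕ} (hcard : Fintype.card V = n)
    (G : SimpleGraph V) (hk1 : (n - 1) / 2 ≤ k) (hk2 : k ≤ n - 2)
    (hβ : ∃ π : V ≃ Fin n, ∀ u v : V, G.Adj u v →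
      |((π u : ℕ) : ℤ) - ((π v : ℕ) : ℤ)| ≤ (k : ℤ)) :
    ∃ L R : Fin (n - k - 1) ↪ V, Set.range L ∩ Set.range R = ∅ ∧
      ∀ i j : Fin (n - k - 1), i ≤ j → ¬ G.Adj (L i) (R j) := by
  obtain ⟨π, hπ⟩ := hβ
  by_cases h0 : n - k - 1 = 0
  · haveI : IsEmpty (Fin (n - k - 1)) := by rw [h0]; infer_instance
    exact ⟨Function.Embedding.ofIsEmpty, Function.Embedding.ofIsEmpty,
      by simp [Set.range_eq_empty], fun i => (IsEmpty.false i).elim⟩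
  · have hn : k + 1 < n := by omega
    have hnk : n - k - 1 ≤ k + 1 := by omega
    have hf : ∀ i : Fin (n - k - 1), (i : ℕ) < n := fun i => by omega
    have hg : ∀ j : Fin (n - k - 1), k + 1 + (j : ℕ) < n := fun j => by omega
    refine ⟨(⟨fun i => (⟨i, hf i⟩ : Fin n), fun a b h => by
        simpa [Fin.ext_iff] using h⟩ : Fin (n-k-1) ↪ Fin n).trans π.symm.toEmbedding,
      (⟨fun j => (⟨k + 1 + j, hg j⟩ : Fin n), fun a b h => by
        simp only [Fin.mk.injEq, add_right_inj] at h
        exact Fin.ext h⟩ : Fin (n-k-1) ↪ Fin n).trans π.symm.toEmbedding, ?_, ?_⟩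
    · ext v
      simp only [Set.mem_inter_iff, Set.mem_range, Function.Embedding.trans_apply,
        Equiv.coe_toEmbedding, Function.Embedding.coeFn_mk, Set.mem_empty_iff_false,
        iff_false, not_and]
      rintro ⟨i, hi⟩ ⟨j, hj⟩
      rw [← hj] at hi
      have := π.symm.injective hi
      have : (i : ℕ) = k + 1 + j := Fin.ext_iff.mp this
      have hi2 : (i : ℕ) < n - k - 1 := i.isLt
      omega
    · intro i j hij hadj
      have h := hπ _ _ hadj
      have e1 : ∀ (f : Fin (n-k-1) → Fin n) (hf') (x), (⟨f, hf'⟩ : Fin (n-k-1) ↪ Fin n) x = f x :=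
        fun _ _ _ => rfl
      simp only [Function.Embedding.trans_apply, Equiv.coe_toEmbedding,
        Function.Embedding.coeFn_mk, Equiv.apply_symm_apply, e1] at h
      rw [abs_le] at h
      have hi2 : (i : ℕ) < n - k - 1 := i.isLt
      have : (i : ℕ) ≤ (j : ℕ) := hij
      simp only [DFunLike.coe] at h
      push_cast at h
      omega
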